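/- The unital subalgebra of U(gl_2(ℂ)) generated by the three elements E_{11}, E_{22}, and E_{12}E_{21} is commutative. -/

import Mathlib

attribute [local instance 100] LieRing.ofAssociativeRing

/-- `E i j` is the image in `U(gl_2(ℂ))` of the matrix unit `E_{ij}`. -/
noncomputable def E (i j : Fin 2) :
    UniversalEnvelopingAlgebra ℂ (Matrix (Fin 2) (Fin 2) ℂ) :=
  UniversalEnvelopingAlgebra.ι ℂ (Matrix.single i j 1)

lemma E_rel (i j k l : Fin 2) :
    E i j * E k l = E k l * E i j +
      UniversalEnvelopingAlgebra.ι ℂ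
        ⁅Matrix.single i j (1:ℂ), Matrix.single k l (1:ℂ)⁆ := by
  rw [LieHom.map_lie, LieRing.of_associative_ring_bracket]
  show E i j * E k l = E k l * E i j + (E i j * E k l - E k l * E i j)
  abel

lemma bracket_eq (i j k l : Fin 2) :
    ⁅Matrix.single i j (1:ℂ), Matrix.single k l (1:ℂ)⁆ =
      Matrix.single i j 1 * Matrix.single k l 1 -
        Matrix.single k l 1 * Matrix.single i j 1 :=
  LieRing.of_associative_ring_bracket _ _

lemma comm_00_11 : E 0 0 * E 1 1 = E 1 1 * E 0 0 := by
  rw [E_rel, bracket_eq]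
  simp [E, sub_eq_add_neg, Matrix.single_mul_single_same]

lemma rel_00_01 : E 0 0 * E 0 1 = E 0 1 * E 0 0 + E 0 1 := by
  rw [E_rel, bracket_eq]
  simp [E, sub_eq_add_neg, Matrix.single_mul_single_same]

lemma rel_00_10 : E 0 0 * E 1 0 = E 1 0 * E 0 0 - E 1 0 := by
  rw [E_rel, bracket_eq]
  simp [E, sub_eq_add_neg, Matrix.single_mul_single_same]

lemma rel_11_01 : E 1 1 * E 0 1 = E 0 1 * E 1 1 - E 0 1 := by
  rw [E_rel, bracket_eq]
  simp [E, sub_eq_add_neg, Matrix.single_mul_single_same]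

lemma rel_11_10 : E 1 1 * E 1 0 = E 1 0 * E 1 1 + E 1 0 := by
  rw [E_rel, bracket_eq]
  simp [E, sub_eq_add_neg, Matrix.single_mul_single_same]

lemma comm_00_prod : E 0 0 * (E 0 1 * E 1 0) = E 0 1 * E 1 0 * E 0 0 := by
  calc E 0 0 * (E 0 1 * E 1 0) = (E 0 0 * E 0 1) * E 1 0 := by noncomm_ring
    _ = (E 0 1 * E 0 0 + E 0 1) * E 1 0 := by rw [rel_00_01]
    _ = E 0 1 * (E 0 0 * E 1 0) + E 0 1 * E 1 0 := by noncomm_ring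
    _ = E 0 1 * (E 1 0 * E 0 0 - E 1 0) + E 0 1 * E 1 0 := by rw [rel_00_10]
    _ = E 0 1 * E 1 0 * E 0 0 := by noncomm_ring

lemma comm_11_prod : E 1 1 * (E 0 1 * E 1 0) = E 0 1 * E 1 0 * E 1 1 := by
  calc E 1 1 * (E 0 1 * E 1 0) = (E 1 1 * E 0 1) * E 1 0 := by noncomm_ring
    _ = (E 0 1 * E 1 1 - E 0 1) * E 1 0 := by rw [rel_11_01]
    _ = E 0 1 * (E 1 1 * E 1 0) - E 0 1 * E 1 0 := by noncomm_ring
    _ = E 0 1 * (E 1 0 * E 1 1 + E 1 0) - E 0 1 * E 1 0 := by rw [rel_11_10]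
    _ = E 0 1 * E 1 0 * E 1 1 := by noncomm_ring

/-- The unital subalgebra of U(gl_2(ℂ)) generated by E_{11}, E_{22} and E_{12}E_{21}
is commutative. -/
theorem stmt6 :
    ∀ x ∈ Algebra.adjoin ℂ ({E 0 0, E 1 1, E 0 1 * E 1 0} :
      Set (UniversalEnvelopingAlgebra ℂ (Matrix (Fin 2) (Fin 2) ℂ))),
    ∀ y ∈ Algebra.adjoin ℂ ({E 0 0, E 1 1, E 0 1 * E 1 0} :
      Set (UniversalEnvelopingAlgebra ℂ (Matrix (Fin 2) (Fin 2) ℂ))),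
      x * y = y * x := by
  have key : ∀ a ∈ ({E 0 0, E 1 1, E 0 1 * E 1 0} :
      Set (UniversalEnvelopingAlgebra ℂ (Matrix (Fin 2) (Fin 2) ℂ))),
      ∀ b ∈ ({E 0 0, E 1 1, E 0 1 * E 1 0} :
      Set (UniversalEnvelopingAlgebra ℂ (Matrix (Fin 2) (Fin 2) ℂ))), Commute a b := by
    rintro a (rfl | rfl | rfl) b (rfl | rfl | rfl) <;> unfold Commute SemiconjBy
    · rfl
    · exact comm_00_11
    · exact comm_00_prod
    · exact comm_00_11.symm
    · rfl
    · exact comm_11_prod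
    · exact comm_00_prod.symm
    · exact comm_11_prod.symm
    · rfl
  intro x hx y hy
  exact (Algebra.commute_of_mem_adjoin_of_forall_mem_commute hy fun b hb =>
    (Algebra.commute_of_mem_adjoin_of_forall_mem_commute hx fun a ha =>
      key b hb a ha).symm).eq
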